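/- Let T be a partition tree for length-n strings X and Y and let L ≥ 0. Then for every node v and shift s ∈ [−L, L], ED(X_v, Y_{v,s}) ≤ TD^L_{v,s}(X, Y), where TD^L is the L-shift-restricted tree distance. In particular at the root with s = 0, ED(X, Y) ≤ TD^L(X, Y). -/

import Mathlib

/-- Costs for the edit distance (removed from Mathlib; restored with its old meaning). -/
structure Levenshtein.Cost (α β δ : Type*) where
  delete : α → δ
  insert : β → δ
  substitute : α → β → δ

/-- The default unit costs (removed from Mathlib; restored with its old meaning). -/
def Levenshtein.defaultCost {α : Type*} [DecidableEq α] : Levenshtein.Cost α α ℕ where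
  delete _ := 1
  insert _ := 1
  substitute a b := if a = b then 0 else 1

/-- Levenshtein distance (removed from Mathlib; defined by the recursion equations that
Mathlib proved for its old `levenshtein`). -/
def levenshtein {α β δ : Type*} [AddZeroClass δ] [Min δ] (C : Levenshtein.Cost α β δ) :
    List α → List β → δ
  | [], [] => 0
  | [], y :: ys => C.insert y + levenshtein C [] ys
  | x :: xs, [] => C.delete x + levenshtein C xs []
  | x :: xs, y :: ys =>
      min (C.delete x + levenshtein C xs (y :: ys))
        (min (C.insert y + levenshtein C (x :: xs) ys) (C.substitute x y + levenshtein C xs ys))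

/-- Levenshtein edit distance between two lists (unit costs). -/
def ED {α : Type*} [DecidableEq α] (X Y : List α) : ℕ :=
  levenshtein Levenshtein.defaultCost X Y

/-- The fragment `X[a..b)` (with out-of-range indices clamped). -/
def strSlice {α : Type*} (X : List α) (a b : ℕ) : List α := (X.drop a).take (b - a)

/-- The fragment `Y[a..b)` for integer indices (clamped to the valid range). -/
def strSliceZ {α : Type*} (Y : List α) (a b : ℤ) : List α :=
  (Y.drop a.toNat).take (b.toNat - a.toNat)

/-- A (node of a) partition tree: a leaf spans one position, an internal node records
the interval of leaves it spans and its list of children. -/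
inductive PTree where
  | leaf (i : ℕ) : PTree
  | node (lo hi : ℕ) (children : List PTree) : PTree

mutual
/-- Well-formedness: the tree `t` spans exactly the interval `[lo, hi)` of leaves and
the children of each node span consecutive subintervals. -/
inductive PTree.WF : PTree → ℕ → ℕ → Prop where
  | leaf (i : ℕ) : PTree.WF (.leaf i) i (i + 1)
  | node (lo hi : ℕ) (cs : List PTree) (hne : cs ≠ []) (h : PTree.WFs cs lo hi) :
      PTree.WF (.node lo hi cs) lo hi
/-- A list of trees spans consecutive intervals covering `[a, c)`. -/
inductive PTree.WFs : List PTree → ℕ → ℕ → Prop where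
  | nil (a : ℕ) : PTree.WFs [] a a
  | cons (t : PTree) (ts : List PTree) (a b c : ℕ) :
      PTree.WF t a b → PTree.WFs ts b c → PTree.WFs (t :: ts) a c
end

/-- The `L`-shift-restricted tree distance `TD^L_{v,s}`: at a leaf it is the edit distance
of the corresponding (shifted) fragments, at an internal node it is the sum over children
of `min_{s' ∈ [−L,L]} (TD^L_{child,s'} + 2|s − s'|)`. -/
noncomputable def TD {α : Type*} [DecidableEq α] (X Y : List α) (L : ℕ) : PTree → ℤ → ℕ
  | .leaf i, s => ED (strSlice X i (i + 1)) (strSliceZ Y ((i : ℤ) + s) ((i : ℤ) + 1 + s))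
  | .node _ _ cs, s =>
      (cs.attach.map (fun c =>
        (Finset.Icc (-(L : ℤ)) (L : ℤ)).inf'
          ⟨0, by simp⟩
          (fun s' => TD X Y L c.1 s' + 2 * (s - s').natAbs))).sum
termination_by t _ => sizeOf t
decreasing_by
  have := List.sizeOf_lt_of_mem c.2
  simp only [PTree.node.sizeOf_spec]
  omega

section EDLemmas

variable {α : Type*} [DecidableEq α]

theorem ED_nil_left (ys : List α) : ED [] ys = ys.length := by
  induction ys with
  | nil => simp [ED, levenshtein]
  | cons y ys ih => simp [ED, levenshtein, Levenshtein.defaultCost] at *; omega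

theorem ED_nil_right (xs : List α) : ED xs [] = xs.length := by
  induction xs with
  | nil => simp [ED, levenshtein]
  | cons x xs ih => simp [ED, levenshtein, Levenshtein.defaultCost] at *; omega

theorem ED_cons_cons (x : α) (xs y ys) :
    ED (x :: xs) (y :: ys) =
      min (1 + ED xs (y :: ys))
        (min (1 + ED (x :: xs) ys) ((if x = y then 0 else 1) + ED xs ys)) := by
  simp [ED, levenshtein, Levenshtein.defaultCost]

theorem ED_self (xs : List α) : ED xs xs = 0 := by
  induction xs with
  | nil => simp [ED, levenshtein]
  | cons x xs ih =>
    have := ED_cons_cons x xs x xs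
    simp [ih] at this
    omega

theorem ED_delete_left (x : α) (xs ys) : ED (x :: xs) ys ≤ 1 + ED xs ys := by
  cases ys with
  | nil => simp [ED_nil_right]
  | cons y ys => rw [ED_cons_cons]; exact min_le_left _ _

theorem ED_insert_right (xs : List α) (y ys) : ED xs (y :: ys) ≤ 1 + ED xs ys := by
  cases xs with
  | nil => simp [ED_nil_left]
  | cons x xs =>
    rw [ED_cons_cons]
    exact le_trans (min_le_right _ _) (min_le_left _ _)

theorem ED_length_le : ∀ (xs ys : List α), xs.length ≤ ED xs ys + ys.length
  | [], ys => by simp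
  | x :: xs, [] => by simp [ED_nil_right]
  | x :: xs, y :: ys => by
      rw [ED_cons_cons]
      have h1 := ED_length_le xs (y :: ys)
      have h2 := ED_length_le (x :: xs) ys
      have h3 := ED_length_le xs ys
      simp only [List.length_cons] at *
      by_cases h : x = y
      · subst h; simp; omega
      · simp [h]; omega
  termination_by xs ys => xs.length + ys.length

theorem ED_delete_right (xs : List α) (y ys) : ED xs ys ≤ ED xs (y :: ys) + 1 := by
  induction xs generalizing ys y with
  | nil => simp [ED_nil_left]; omega
  | cons x xs ih =>
    rw [ED_cons_cons (x := x) (y := y)]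
    have h1 : ED (x :: xs) ys ≤ (1 + ED xs (y :: ys)) + 1 := by
      have := ED_delete_left x xs ys
      have := ih y ys
      omega
    have h2 : ED (x :: xs) ys ≤ (1 + ED (x :: xs) ys) + 1 := by omega
    have h3 : ED (x :: xs) ys ≤ ((if x = y then 0 else 1) + ED xs ys) + 1 := by
      have := ED_delete_left x xs ys
      split <;> omega
    omega

theorem ED_snoc_right : ∀ (xs ys : List α) (t : α), ED xs ys ≤ ED xs (ys ++ [t]) + 1
  | [], ys, t => by simp [ED_nil_left]; omega
  | x :: xs, [], t => by
      simp only [List.nil_append, ED_nil_right]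
      have := ED_length_le (x :: xs) [t]
      simp only [List.length_cons, List.length_singleton, List.length_nil] at this ⊢
      omega
  | x :: xs, y :: ys, t => by
      rw [ED_cons_cons, show (y :: ys) ++ [t] = y :: (ys ++ [t]) from rfl, ED_cons_cons]
      have h1 := ED_snoc_right xs (y :: ys) t
      have h2 := ED_snoc_right (x :: xs) ys t
      have h3 := ED_snoc_right xs ys t
      simp only [List.cons_append] at h1
      omega
  termination_by xs ys _ => xs.length + ys.length

theorem ED_append_le : ∀ (xs us ys vs : List α),
    ED (xs ++ us) (ys ++ vs) ≤ ED xs ys + ED us vs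
  | [], us, [], vs => by simp
  | [], us, y :: ys, vs => by
      have h1 := ED_insert_right us y (ys ++ vs)
      have h2 := ED_append_le [] us ys vs
      simp only [List.nil_append] at *
      simp [ED_nil_left] at *
      omega
  | x :: xs, us, [], vs => by
      have h1 := ED_delete_left x (xs ++ us) vs
      have h2 := ED_append_le xs us [] vs
      simp only [List.nil_append] at *
      simp [ED_nil_right] at *
      omega
  | x :: xs, us, y :: ys, vs => by
      rw [List.cons_append, List.cons_append, ED_cons_cons, ED_cons_cons]
      have h1 := ED_append_le xs us (y :: ys) vs
      have h2 := ED_append_le (x :: xs) us ys vs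
      have h3 := ED_append_le xs us ys vs
      simp only [List.cons_append] at *
      omega
  termination_by xs _ ys _ => xs.length + ys.length

theorem ED_append_right_le (xs ys ts : List α) : ED xs (ys ++ ts) ≤ ED xs ys + ts.length := by
  have := ED_append_le xs [] ys ts
  simp [ED_nil_left] at this
  omega

theorem ED_prepend_right_le (xs ts ys : List α) : ED xs (ts ++ ys) ≤ ts.length + ED xs ys := by
  induction ts with
  | nil => simp
  | cons t ts ih =>
    have := ED_insert_right xs t (ts ++ ys)
    simp only [List.cons_append]
    simp only [List.length_cons]
    omega

theorem ED_drop_right_le (xs ys : List α) (k : ℕ) : ED xs (ys.drop k) ≤ ED xs ys + k := by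
  induction k generalizing ys with
  | zero => simp
  | succ k ih =>
    cases ys with
    | nil => simp
    | cons y ys =>
      have h1 := ih ys
      have h2 := ED_delete_right xs y ys
      simp only [List.drop_succ_cons]
      omega

theorem ED_le_append_right (xs ys ts : List α) : ED xs ys ≤ ED xs (ys ++ ts) + ts.length := by
  induction ts generalizing ys with
  | nil => simp
  | cons t ts ih =>
    have h1 := ED_snoc_right xs ys t
    have h2 := ih (ys ++ [t])
    rw [List.append_assoc, List.singleton_append] at h2
    simp only [List.length_cons]
    omega

theorem ED_take_right_le (xs ys : List α) (m : ℕ) :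
    ED xs (ys.take m) ≤ ED xs ys + (ys.length - m) := by
  have h := ED_le_append_right xs (ys.take m) (ys.drop m)
  rw [List.take_append_drop] at h
  simp only [List.length_drop] at h
  exact h

/-- Splitting a window at an intermediate point. -/
theorem window_split (Y : List α) {p q r : ℕ} (h1 : p ≤ q) (h2 : q ≤ r) :
    (Y.drop p).take (r - p) = (Y.drop p).take (q - p) ++ (Y.drop q).take (r - q) := by
  have : r - p = (q - p) + (r - q) := by omega
  rw [this, List.take_add, List.drop_drop]
  have e : p + (q - p) = q := by omega
  rw [e]

theorem ED_window_shift_right (xs Y : List α) {p q p' q' : ℕ} (hp : p' ≤ p) (hq : q' ≤ q) :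
    ED xs ((Y.drop p).take (q - p)) ≤
      ED xs ((Y.drop p').take (q' - p')) + ((p - p') + (q - q')) := by
  by_cases h : p ≤ q'
  · have key : (Y.drop p).take (q - p) =
        (((Y.drop p').take (q' - p')).drop (p - p')) ++ ((Y.drop q').take (q - q')) := by
      rw [List.drop_take, List.drop_drop]
      have e1 : p' + (p - p') = p := by omega
      have e2 : q' - p' - (p - p') = q' - p := by omega
      rw [e1, e2]
      exact window_split Y h hq
    rw [key]
    have h1 := ED_append_right_le xs
      (((Y.drop p').take (q' - p')).drop (p - p')) ((Y.drop q').take (q - q'))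
    have h2 := ED_drop_right_le xs ((Y.drop p').take (q' - p')) (p - p')
    have h3 := List.length_take_le (q - q') (Y.drop q')
    omega
  · have key : (Y.drop p).take (q - p) =
        (((Y.drop p').take (q' - p')).drop (p - p')) ++ ((Y.drop p).take (q - p)) := by
      rw [show (((Y.drop p').take (q' - p')).drop (p - p')) = [] from
        List.drop_eq_nil_of_le (le_trans (List.length_take_le _ _) (by omega)),
        List.nil_append]
    rw [key]
    have h1 := ED_append_right_le xs
      (((Y.drop p').take (q' - p')).drop (p - p')) ((Y.drop p).take (q - p))
    have h2 := ED_drop_right_le xs ((Y.drop p').take (q' - p')) (p - p')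
    have h3 := List.length_take_le (q - p) (Y.drop p)
    omega

theorem ED_window_shift_left (xs Y : List α) {p q p' q' : ℕ} (hp : p ≤ p') (hq : q ≤ q') :
    ED xs ((Y.drop p).take (q - p)) ≤
      ED xs ((Y.drop p').take (q' - p')) + ((p' - p) + (q' - q)) := by
  by_cases h : p' ≤ q
  · have key : (Y.drop p).take (q - p) =
        ((Y.drop p).take (p' - p)) ++ (((Y.drop p').take (q' - p')).take (q - p')) := by
      rw [List.take_take, show min (q - p') (q' - p') = q - p' by omega]
      exact window_split Y (by omega) h
    rw [key]
    have h1 := ED_prepend_right_le xs ((Y.drop p).take (p' - p))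
      (((Y.drop p').take (q' - p')).take (q - p'))
    have h2 := ED_take_right_le xs ((Y.drop p').take (q' - p')) (q - p')
    have h3 := List.length_take_le (p' - p) (Y.drop p)
    have h4 := List.length_take_le (q' - p') (Y.drop p')
    omega
  · have h1 := ED_append_right_le xs [] ((Y.drop p).take (q - p))
    rw [List.nil_append, ED_nil_right] at h1
    have h2 := ED_length_le xs ((Y.drop p').take (q' - p'))
    have h3 := List.length_take_le (q - p) (Y.drop p)
    have h4 := List.length_take_le (q' - p') (Y.drop p')
    omega


theorem ED_shiftZ (xs Y : List α) (a b s s' : ℤ) :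
    ED xs (strSliceZ Y (a + s) (b + s)) ≤
      ED xs (strSliceZ Y (a + s') (b + s')) + 2 * (s - s').natAbs := by
  unfold strSliceZ
  rcases le_total s' s with h | h
  · have := ED_window_shift_right xs Y (p := (a + s).toNat) (q := (b + s).toNat)
      (p' := (a + s').toNat) (q' := (b + s').toNat) (by omega) (by omega)
    omega
  · have := ED_window_shift_left xs Y (p := (a + s).toNat) (q := (b + s).toNat)
      (p' := (a + s').toNat) (q' := (b + s').toNat) (by omega) (by omega)
    omega

theorem strSlice_split (X : List α) {a b c : ℕ} (h1 : a ≤ b) (h2 : b ≤ c) :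
    strSlice X a c = strSlice X a b ++ strSlice X b c :=
  window_split X h1 h2

theorem strSliceZ_split (Y : List α) {a b c : ℤ} (h1 : a ≤ b) (h2 : b ≤ c) :
    strSliceZ Y a c = strSliceZ Y a b ++ strSliceZ Y b c :=
  window_split Y (by omega) (by omega)

theorem WFs_le_aux : ∀ (cs : List PTree) (a c : ℕ),
    (∀ t ∈ cs, ∀ lo hi, PTree.WF t lo hi → lo ≤ hi) → PTree.WFs cs a c → a ≤ c := by
  intro cs
  induction cs with
  | nil => intro a c _ hw; cases hw; exact le_refl _
  | cons t ts ih =>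
    intro a c hmem hw
    cases hw with
    | cons _ _ _ b _ h1 h2 =>
      exact le_trans (hmem t (by simp) a b h1) (ih b c (fun u hu => hmem u (by simp [hu])) h2)

theorem WF_le_size : ∀ (N : ℕ) (t : PTree) (lo hi : ℕ), sizeOf t ≤ N →
    PTree.WF t lo hi → lo ≤ hi := by
  intro N
  induction N with
  | zero =>
    intro t lo hi hs _
    cases t <;> simp +arith +decide at hs
  | succ N ih =>
    intro t lo hi hs hw
    cases hw with
    | leaf i => omega
    | node lo hi cs hne h =>
      refine WFs_le_aux cs lo hi (fun u hu lo' hi' hw' => ih u lo' hi' ?_ hw') h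
      have := List.sizeOf_lt_of_mem hu
      simp only [PTree.node.sizeOf_spec] at hs ⊢
      omega

theorem WF_le {t : PTree} {lo hi : ℕ} (h : PTree.WF t lo hi) : lo ≤ hi :=
  WF_le_size (sizeOf t) t lo hi le_rfl h

theorem WFs_le {cs : List PTree} {a c : ℕ} (h : PTree.WFs cs a c) : a ≤ c :=
  WFs_le_aux cs a c (fun _ _ _ _ hw => WF_le hw) h

end EDLemmas

section Main

variable {α : Type*} [DecidableEq α] (X Y : List α) (L : ℕ)

theorem main_list : ∀ (cs : List PTree) (a c : ℕ),
    (∀ t ∈ cs, ∀ lo hi, PTree.WF t lo hi → ∀ s' : ℤ, -(L : ℤ) ≤ s' → s' ≤ L →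
      ED (strSlice X lo hi) (strSliceZ Y ((lo : ℤ) + s') ((hi : ℤ) + s')) ≤ TD X Y L t s') →
    PTree.WFs cs a c → ∀ s : ℤ, -(L : ℤ) ≤ s → s ≤ L →
    ED (strSlice X a c) (strSliceZ Y ((a : ℤ) + s) ((c : ℤ) + s)) ≤
      (cs.map (fun t => (Finset.Icc (-(L : ℤ)) (L : ℤ)).inf' ⟨0, by simp⟩
        (fun s' => TD X Y L t s' + 2 * (s - s').natAbs))).sum := by
  intro cs
  induction cs with
  | nil =>
    intro a c _ hw s _ _
    cases hw
    simp [strSlice, strSliceZ, ED_self]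
  | cons t ts ih =>
    intro a c hmem hw s hL1 hL2
    cases hw with
    | cons _ _ _ b _ h1 h2 =>
      have hab : a ≤ b := WF_le h1
      have hbc : b ≤ c := WFs_le h2
      rw [strSlice_split X hab hbc,
        strSliceZ_split Y (a := (a : ℤ) + s) (b := (b : ℤ) + s) (c := (c : ℤ) + s)
          (by omega) (by omega)]
      have happ := ED_append_le (strSlice X a b) (strSlice X b c)
        (strSliceZ Y ((a : ℤ) + s) ((b : ℤ) + s)) (strSliceZ Y ((b : ℤ) + s) ((c : ℤ) + s))
      have hhead : ED (strSlice X a b) (strSliceZ Y ((a : ℤ) + s) ((b : ℤ) + s)) ≤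
          (Finset.Icc (-(L : ℤ)) (L : ℤ)).inf' ⟨0, by simp⟩
            (fun s' => TD X Y L t s' + 2 * (s - s').natAbs) := by
        apply Finset.le_inf'
        intro s' hs'
        rw [Finset.mem_Icc] at hs'
        have hshift := ED_shiftZ (strSlice X a b) Y (a : ℤ) (b : ℤ) s s'
        have hbase := hmem t (by simp) a b h1 s' hs'.1 hs'.2
        omega
      have htail := ih b c (fun u hu => hmem u (by simp [hu])) h2 s hL1 hL2
      rw [List.map_cons, List.sum_cons]
      omega

theorem main_td : ∀ (N : ℕ) (t : PTree) (lo hi : ℕ), sizeOf t ≤ N →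
    PTree.WF t lo hi → ∀ s : ℤ, -(L : ℤ) ≤ s → s ≤ L →
    ED (strSlice X lo hi) (strSliceZ Y ((lo : ℤ) + s) ((hi : ℤ) + s)) ≤ TD X Y L t s := by
  intro N
  induction N with
  | zero =>
    intro t lo hi hs
    cases t <;> simp +arith +decide at hs
  | succ N ih =>
    intro t lo hi hs hw s hL1 hL2
    cases hw with
    | leaf =>
      rw [TD]
      apply le_of_eq
      norm_cast
    | node lo hi cs hne h =>
      show _ ≤ TD X Y L (.node lo hi cs) s
      rw [TD]
      rw [List.attach_map_val (l := cs) (f := fun c => (Finset.Icc (-(L : ℤ)) (L : ℤ)).inf' ⟨0, by simp⟩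
        (fun s' => TD X Y L c s' + 2 * (s - s').natAbs))]
      refine main_list X Y L cs lo hi ?_ h s hL1 hL2
      intro u hu lo' hi' hw' s' h1 h2
      refine ih u lo' hi' ?_ hw' s' h1 h2
      have := List.sizeOf_lt_of_mem hu
      simp only [PTree.node.sizeOf_spec] at hs ⊢
      omega

end Main

/-- Lower bound on the shift-restricted tree distance: for every well-formed (sub)tree `v`
spanning `[lo, hi)` and every shift `s ∈ [−L, L]`, `ED(X_v, Y_{v,s}) ≤ TD^L_{v,s}(X, Y)`;
in particular, at the root with shift `0`, `ED(X, Y) ≤ TD^L(X, Y)`. -/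
theorem ed_le_td {α : Type*} [DecidableEq α] (X Y : List α) (n : ℕ)
    (hX : X.length = n) (hY : Y.length = n) (L : ℕ) :
    (∀ (t : PTree) (lo hi : ℕ), PTree.WF t lo hi → ∀ s : ℤ, -(L : ℤ) ≤ s → s ≤ L →
        ED (strSlice X lo hi) (strSliceZ Y ((lo : ℤ) + s) ((hi : ℤ) + s)) ≤ TD X Y L t s) ∧
      (∀ t : PTree, PTree.WF t 0 n → ED X Y ≤ TD X Y L t 0) := by
  have hmain : ∀ (t : PTree) (lo hi : ℕ), PTree.WF t lo hi → ∀ s : ℤ, -(L : ℤ) ≤ s → s ≤ L →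
      ED (strSlice X lo hi) (strSliceZ Y ((lo : ℤ) + s) ((hi : ℤ) + s)) ≤ TD X Y L t s :=
    fun t lo hi hw s h1 h2 => main_td X Y L (sizeOf t) t lo hi le_rfl hw s h1 h2
  refine ⟨hmain, fun t hw => ?_⟩
  have h0 := hmain t 0 n hw 0 (by omega) (by omega)
  have e1 : strSlice X 0 n = X := by
    simp [strSlice, ← hX]
  have e2 : strSliceZ Y ((0 : ℕ) + (0 : ℤ)) ((n : ℤ) + 0) = Y := by
    simp [strSliceZ, ← hY]
  rw [e1, e2] at h0
  exact h0
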